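/- Let p < q < r be primes, let n₁, n₂, n₃ ≥ 1 be integers, set n = p^{n₁} q^{n₂} r^{n₃} and A = p^{n₁−1} q^{n₂−1} r^{n₃−1}. Then the independent domination polynomial of the comaximal graph Γ(ℤ_n) is D_i(Γ(ℤ_n), x) = φ(n)·x + x^{A(p+q+r−2)} + x^{A·pq} + x^{A·pr} + x^{A·qr}. -/

import Mathlib

set_option maxHeartbeats 1000000


open Polynomial

/-- The comaximal graph of `ℤ/nℤ`: distinct `a, b` are adjacent iff the ideal
generated by `a` and `b` is the whole ring. -/
def comaximalGraph (n : ℕ) : SimpleGraph (ZMod n) where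
  Adj a b := a ≠ b ∧ Ideal.span ({a, b} : Set (ZMod n)) = ⊤
  symm := by
    constructor
    rintro a b ⟨hab, h⟩
    refine ⟨hab.symm, ?_⟩
    rwa [Set.pair_comm]
  loopless := by
    constructor
    rintro a ⟨h, -⟩
    exact h rfl

/-- `S` is an independent dominating set of `G`. -/
def IsIndepDomSet {V : Type*} (G : SimpleGraph V) (S : Finset V) : Prop :=
  (∀ a ∈ S, ∀ b ∈ S, ¬ G.Adj a b) ∧ ∀ v : V, v ∉ S → ∃ u ∈ S, G.Adj u v

/-- The independent domination polynomial `D_i(G, x) = Σ_k d_i(G,k) x^k`. -/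
noncomputable def indepDomPoly {V : Type*} (G : SimpleGraph V) : Polynomial ℝ :=
  ∑ k ∈ Finset.range (Nat.card V + 1),
    Polynomial.C ((Nat.card {S : Finset V // IsIndepDomSet G S ∧ S.card = k}) : ℝ) *
      Polynomial.X ^ k

/-- The independence polynomial `I(G, x) = Σ_k c_k x^k`. -/
noncomputable def indepPoly {V : Type*} (G : SimpleGraph V) : Polynomial ℝ :=
  ∑ k ∈ Finset.range (Nat.card V + 1),
    Polynomial.C ((Nat.card {S : Finset V //
        (∀ a ∈ S, ∀ b ∈ S, ¬ G.Adj a b) ∧ S.card = k}) : ℝ) *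
      Polynomial.X ^ k

open Finset

lemma span_pair_top_iff' {n : ℕ} [NeZero n] (a b : ZMod n) :
    Ideal.span ({a, b} : Set (ZMod n)) = ⊤ ↔ Nat.gcd (Nat.gcd a.val b.val) n = 1 := by
  rw [Ideal.eq_top_iff_one]
  constructor
  · intro h
    rw [Ideal.mem_span_pair] at h
    obtain ⟨u, v, huv⟩ := h
    set g := Nat.gcd (Nat.gcd a.val b.val) n with hg
    have hga : g ∣ a.val := (Nat.gcd_dvd_left _ _).trans (Nat.gcd_dvd_left _ _)
    have hgb : g ∣ b.val := (Nat.gcd_dvd_left _ _).trans (Nat.gcd_dvd_right _ _)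
    have hgn : g ∣ n := Nat.gcd_dvd_right _ _
    have hda : (g : ZMod n) ∣ a := by
      have := Nat.cast_dvd_cast (α := ZMod n) hga
      rwa [ZMod.natCast_rightInverse a] at this
    have hdb : (g : ZMod n) ∣ b := by
      have := Nat.cast_dvd_cast (α := ZMod n) hgb
      rwa [ZMod.natCast_rightInverse b] at this
    have hunit : IsUnit (g : ZMod n) := by
      refine isUnit_of_dvd_one ?_
      rw [← huv]
      exact dvd_add (Dvd.dvd.mul_left hda u) (Dvd.dvd.mul_left hdb v)
    have hcop : Nat.Coprime g n := (ZMod.isUnit_iff_coprime g n).mp hunit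
    have hd1 : g ∣ Nat.gcd g n := Nat.dvd_gcd dvd_rfl hgn
    rw [hcop] at hd1
    exact Nat.dvd_one.mp hd1
  · intro h
    set m := Nat.gcd a.val b.val with hm
    -- Bezout over ℤ, cast to ZMod n
    have hbez : (m : ℤ) = (a.val : ℤ) * Int.gcdA a.val b.val + (b.val : ℤ) * Int.gcdB a.val b.val := by
      have := Int.gcd_eq_gcd_ab (a.val : ℤ) (b.val : ℤ)
      rwa [Int.gcd_natCast_natCast] at this
    have hmem : (m : ZMod n) ∈ Ideal.span ({a, b} : Set (ZMod n)) := by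
      rw [Ideal.mem_span_pair]
      refine ⟨(Int.gcdA a.val b.val : ZMod n), (Int.gcdB a.val b.val : ZMod n), ?_⟩
      have := congrArg (fun z : ℤ => (z : ZMod n)) hbez
      push_cast at this
      rw [ZMod.natCast_rightInverse a, ZMod.natCast_rightInverse b] at this
      rw [this]
      ring
    have hunit : IsUnit (m : ZMod n) := (ZMod.isUnit_iff_coprime m n).mpr h
    exact (Ideal.span ({a,b} : Set (ZMod n))).eq_top_of_isUnit_mem hmem hunit ▸ Submodule.mem_top

lemma card_filter_val {n : ℕ} [NeZero n] (P : ℕ → Prop) [DecidablePred P] :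
    ((univ : Finset (ZMod n)).filter fun x => P x.val).card = ((range n).filter P).card := by
  refine Finset.card_bij (fun x _ => x.val) ?_ ?_ ?_
  · intro x hx
    simp only [mem_filter, mem_range, mem_univ, true_and] at hx ⊢
    exact ⟨ZMod.val_lt x, hx⟩
  · intro x _ y _ h
    have := congrArg (fun m : ℕ => (m : ZMod n)) h
    simpa only [ZMod.natCast_rightInverse x, ZMod.natCast_rightInverse y] using this
  · intro m hm
    simp only [mem_filter, mem_range] at hm
    refine ⟨(m : ZMod n), by simp [ZMod.val_cast_of_lt hm.1, hm.2], ?_⟩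
    exact ZMod.val_cast_of_lt hm.1

lemma range_filter_dvd (d m : ℕ) (hd : 0 < d) :
    ((range (d * m)).filter (fun k => d ∣ k)).card = m := by
  have : ((range (d * m)).filter (fun k => d ∣ k)) = (range m).image (d * ·) := by
    ext k
    simp only [mem_filter, mem_range, mem_image]
    constructor
    · rintro ⟨hk, j, rfl⟩
      exact ⟨j, by exact (Nat.mul_lt_mul_left hd).mp hk, rfl⟩
    · rintro ⟨j, hj, rfl⟩
      exact ⟨(Nat.mul_lt_mul_left hd).mpr hj, j, rfl⟩
  rw [this, Finset.card_image_of_injective _ (fun a b h => Nat.eq_of_mul_eq_mul_left hd h), Finset.card_range]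

lemma card_dvd_val {n : ℕ} [NeZero n] (d m : ℕ) (hd : 0 < d) (h : n = d * m) :
    ((univ : Finset (ZMod n)).filter fun x => d ∣ x.val).card = m := by
  rw [card_filter_val (fun k => d ∣ k)]
  subst h
  exact range_filter_dvd d m hd

lemma card_isUnit {n : ℕ} [NeZero n] :
    ((univ : Finset (ZMod n)).filter fun x => IsUnit x).card = n.totient := by
  have : ((univ : Finset (ZMod n)).filter fun x => IsUnit x)
      = ((univ : Finset (ZMod n)).filter fun x => Nat.Coprime n x.val) := by
    refine Finset.filter_congr fun x _ => ?_
    conv_lhs => rw [← ZMod.natCast_rightInverse x]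
    rw [ZMod.isUnit_iff_coprime]
    exact ⟨fun h => h.symm, fun h => h.symm⟩
  rw [this, card_filter_val (fun k => Nat.Coprime n k)]
  rfl

section Main

variable {p q r aa bb cc n : ℕ} 

lemma coprime_fact (hp : p.Prime) (hq : q.Prime) (hr : r.Prime)
    (hpq : p ≠ q) (hpr : p ≠ r) (hqr : q ≠ r)
    (hn : n = p ^ (aa+1) * q ^ (bb+1) * r ^ (cc+1)) (g : ℕ) :
    Nat.gcd g n = 1 ↔ ¬ p ∣ g ∧ ¬ q ∣ g ∧ ¬ r ∣ g := by
  have : Nat.gcd g n = 1 ↔ Nat.Coprime g n := Iff.rfl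
  rw [this, hn, Nat.coprime_mul_iff_right, Nat.coprime_mul_iff_right,
    Nat.coprime_pow_right_iff (Nat.succ_pos aa), Nat.coprime_pow_right_iff (Nat.succ_pos bb),
    Nat.coprime_pow_right_iff (Nat.succ_pos cc),
    Nat.coprime_comm (m := p) (n := g), Nat.coprime_comm (m := q) (n := g), Nat.coprime_comm (m := r) (n := g),
    hp.coprime_iff_not_dvd, hq.coprime_iff_not_dvd, hr.coprime_iff_not_dvd]
  tauto

lemma adj_iff [NeZero n] (hp : p.Prime) (hq : q.Prime) (hr : r.Prime)
    (hpq : p ≠ q) (hpr : p ≠ r) (hqr : q ≠ r)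
    (hn : n = p ^ (aa+1) * q ^ (bb+1) * r ^ (cc+1)) (x y : ZMod n) :
    (comaximalGraph n).Adj x y ↔ x ≠ y ∧ ¬(p ∣ x.val ∧ p ∣ y.val)
      ∧ ¬(q ∣ x.val ∧ q ∣ y.val) ∧ ¬(r ∣ x.val ∧ r ∣ y.val) := by
  have : (comaximalGraph n).Adj x y ↔ x ≠ y ∧ Ideal.span ({x,y} : Set (ZMod n)) = ⊤ := Iff.rfl
  rw [this, span_pair_top_iff', coprime_fact hp hq hr hpq hpr hqr hn,
    Nat.dvd_gcd_iff, Nat.dvd_gcd_iff, Nat.dvd_gcd_iff]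

lemma isUnit_iff_three [NeZero n] (hp : p.Prime) (hq : q.Prime) (hr : r.Prime)
    (hpq : p ≠ q) (hpr : p ≠ r) (hqr : q ≠ r)
    (hn : n = p ^ (aa+1) * q ^ (bb+1) * r ^ (cc+1)) (x : ZMod n) :
    IsUnit x ↔ ¬ p ∣ x.val ∧ ¬ q ∣ x.val ∧ ¬ r ∣ x.val := by
  conv_lhs => rw [← ZMod.natCast_rightInverse x]
  rw [ZMod.isUnit_iff_coprime, ← coprime_fact hp hq hr hpq hpr hqr hn]

end Main

section Char

variable {p q r aa bb cc n : ℕ}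

lemma ids_char [NeZero n] (hp : p.Prime) (hq : q.Prime) (hr : r.Prime)
    (hpq : p ≠ q) (hpr : p ≠ r) (hqr : q ≠ r)
    (hn : n = p ^ (aa+1) * q ^ (bb+1) * r ^ (cc+1)) (S : Finset (ZMod n)) :
    IsIndepDomSet (comaximalGraph n) S ↔
      (∃ u : ZMod n, IsUnit u ∧ S = {u}) ∨
      S = univ.filter (fun x : ZMod n => p ∣ x.val) ∨
      S = univ.filter (fun x : ZMod n => q ∣ x.val) ∨
      S = univ.filter (fun x : ZMod n => r ∣ x.val) ∨
      S = univ.filter (fun x : ZMod n =>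
        (p ∣ x.val ∧ q ∣ x.val) ∨ (p ∣ x.val ∧ r ∣ x.val) ∨ (q ∣ x.val ∧ r ∣ x.val)) := by
  have hp2 := hp.two_le
  have hq2 := hq.two_le
  have hr2 := hr.two_le
  -- size facts
  have hpqr_le : p * q * r ≤ n := by
    rw [hn]
    exact Nat.mul_le_mul (Nat.mul_le_mul (Nat.le_self_pow (Nat.succ_ne_zero _) p)
      (Nat.le_self_pow (Nat.succ_ne_zero _) q)) (Nat.le_self_pow (Nat.succ_ne_zero _) r)
  have hpq_lt : p * q < n := lt_of_lt_of_le
    ((Nat.lt_mul_iff_one_lt_right (by positivity)).mpr (by omega)) hpqr_le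
  have hpr_lt : p * r < n := by
    refine lt_of_lt_of_le ?_ hpqr_le
    calc p * r < q * (p * r) := (Nat.lt_mul_iff_one_lt_left (by positivity)).mpr (by omega)
      _ = p * q * r := by ring
  have hqr_lt : q * r < n := by
    refine lt_of_lt_of_le ?_ hpqr_le
    calc q * r < p * (q * r) := (Nat.lt_mul_iff_one_lt_left (by positivity)).mpr (by omega)
      _ = p * q * r := by ring
  have hp_lt : p < n := lt_of_le_of_lt (Nat.le_mul_of_pos_right p (by omega)) hpq_lt
  have hq_lt : q < n := lt_of_le_of_lt (Nat.le_mul_of_pos_left q (by omega)) hpq_lt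
  have hr_lt : r < n := lt_of_le_of_lt (Nat.le_mul_of_pos_left r (by omega)) hpr_lt
  -- non-divisibilities among primes
  have hnqp : ¬ q ∣ p := fun h => hqr.elim (False.elim (hpq ((Nat.prime_dvd_prime_iff_eq hq hp).mp h).symm))
  have hnrp : ¬ r ∣ p := fun h => hpr (((Nat.prime_dvd_prime_iff_eq hr hp).mp h).symm)
  have hnpq : ¬ p ∣ q := fun h => hpq ((Nat.prime_dvd_prime_iff_eq hp hq).mp h)
  have hnrq : ¬ r ∣ q := fun h => hqr (((Nat.prime_dvd_prime_iff_eq hr hq).mp h).symm)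
  have hnpr : ¬ p ∣ r := fun h => hpr ((Nat.prime_dvd_prime_iff_eq hp hr).mp h)
  have hnqr : ¬ q ∣ r := fun h => hqr ((Nat.prime_dvd_prime_iff_eq hq hr).mp h)
  have hnr_pq : ¬ r ∣ p * q := fun h => ((hr.dvd_mul).mp h).elim hnrp hnrq
  have hnq_pr : ¬ q ∣ p * r := fun h => ((hq.dvd_mul).mp h).elim hnqp hnqr
  have hnp_qr : ¬ p ∣ q * r := fun h => ((hp.dvd_mul).mp h).elim hnpq hnpr
  -- witnesses
  have hwp : ((p : ZMod n)).val = p := ZMod.val_cast_of_lt hp_lt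
  have hwq : ((q : ZMod n)).val = q := ZMod.val_cast_of_lt hq_lt
  have hwr : ((r : ZMod n)).val = r := ZMod.val_cast_of_lt hr_lt
  have hwpq : (((p*q : ℕ) : ZMod n)).val = p*q := ZMod.val_cast_of_lt hpq_lt
  have hwpr : (((p*r : ℕ) : ZMod n)).val = p*r := ZMod.val_cast_of_lt hpr_lt
  have hwqr : (((q*r : ℕ) : ZMod n)).val = q*r := ZMod.val_cast_of_lt hqr_lt
  have adj := adj_iff hp hq hr hpq hpr hqr hn
  have unit3 := isUnit_iff_three hp hq hr hpq hpr hqr hn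
  constructor
  · rintro ⟨hind, hdom⟩
    by_cases hu : ∃ u ∈ S, IsUnit u
    · obtain ⟨u, huS, hunit⟩ := hu
      rw [unit3] at hunit
      left
      refine ⟨u, (unit3 u).mpr hunit, ?_⟩
      ext v
      simp only [Finset.mem_singleton]
      constructor
      · intro hvS
        by_contra hne
        exact hind u huS v hvS ((adj u v).mpr ⟨fun h => hne h.symm,
          fun h => hunit.1 h.1, fun h => hunit.2.1 h.1, fun h => hunit.2.2 h.1⟩)
      · rintro rfl; exact huS
    · push_neg at hu
      -- every element of S is a nonunit
      have hnu : ∀ s ∈ S, p ∣ s.val ∨ q ∣ s.val ∨ r ∣ s.val := by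
        intro s hs
        have hns := hu s hs
        rw [unit3] at hns
        by_contra hcon
        push_neg at hcon
        exact hns ⟨hcon.1, hcon.2.1, hcon.2.2⟩
      -- pairwise common prime
      have hind' : ∀ s ∈ S, ∀ t ∈ S,
          (p ∣ s.val ∧ p ∣ t.val) ∨ (q ∣ s.val ∧ q ∣ t.val) ∨ (r ∣ s.val ∧ r ∣ t.val) := by
        intro s hs t ht
        by_cases hst : s = t
        · subst hst
          rcases hnu s hs with h | h | h
          · exact Or.inl ⟨h, h⟩
          · exact Or.inr (Or.inl ⟨h, h⟩)
          · exact Or.inr (Or.inr ⟨h, h⟩)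
        · have hna := hind s hs t ht
          rw [adj] at hna
          by_contra hcon
          push_neg at hcon
          exact hna ⟨hst, fun h => hcon.1 h.1 h.2, fun h => hcon.2.1 h.1 h.2,
            fun h => hcon.2.2 h.1 h.2⟩
      right
      by_cases hsp : ∃ s ∈ S, p ∣ s.val ∧ ¬ q ∣ s.val ∧ ¬ r ∣ s.val
      · left
        obtain ⟨s, hs, hs1, hs2, hs3⟩ := hsp
        have hsub : ∀ t ∈ S, p ∣ t.val := by
          intro t ht
          rcases hind' s hs t ht with h | h | h
          · exact h.2
          · exact absurd h.1 hs2
          · exact absurd h.1 hs3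
        ext v
        simp only [Finset.mem_filter, Finset.mem_univ, true_and]
        refine ⟨hsub v, ?_⟩
        intro hpv
        by_contra hvS
        obtain ⟨t, htS, hadj⟩ := hdom v hvS
        rw [adj] at hadj
        exact hadj.2.1 ⟨hsub t htS, hpv⟩
      by_cases hsq : ∃ s ∈ S, q ∣ s.val ∧ ¬ p ∣ s.val ∧ ¬ r ∣ s.val
      · right; left
        obtain ⟨s, hs, hs1, hs2, hs3⟩ := hsq
        have hsub : ∀ t ∈ S, q ∣ t.val := by
          intro t ht
          rcases hind' s hs t ht with h | h | h
          · exact absurd h.1 hs2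
          · exact h.2
          · exact absurd h.1 hs3
        ext v
        simp only [Finset.mem_filter, Finset.mem_univ, true_and]
        refine ⟨hsub v, ?_⟩
        intro hqv
        by_contra hvS
        obtain ⟨t, htS, hadj⟩ := hdom v hvS
        rw [adj] at hadj
        exact hadj.2.2.1 ⟨hsub t htS, hqv⟩
      by_cases hsr : ∃ s ∈ S, r ∣ s.val ∧ ¬ p ∣ s.val ∧ ¬ q ∣ s.val
      · right; right; left
        obtain ⟨s, hs, hs1, hs2, hs3⟩ := hsr
        have hsub : ∀ t ∈ S, r ∣ t.val := by
          intro t ht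
          rcases hind' s hs t ht with h | h | h
          · exact absurd h.1 hs2
          · exact absurd h.1 hs3
          · exact h.2
        ext v
        simp only [Finset.mem_filter, Finset.mem_univ, true_and]
        refine ⟨hsub v, ?_⟩
        intro hrv
        by_contra hvS
        obtain ⟨t, htS, hadj⟩ := hdom v hvS
        rw [adj] at hadj
        exact hadj.2.2.2 ⟨hsub t htS, hrv⟩
      · right; right; right
        push_neg at hsp hsq hsr
        have hS2 : ∀ s ∈ S, (p ∣ s.val ∧ q ∣ s.val) ∨ (p ∣ s.val ∧ r ∣ s.val)
            ∨ (q ∣ s.val ∧ r ∣ s.val) := by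
          intro s hs
          rcases hnu s hs with h | h | h
          · rcases Classical.em (q ∣ s.val) with hq' | hq'
            · exact Or.inl ⟨h, hq'⟩
            · exact Or.inr (Or.inl ⟨h, hsp s hs h hq'⟩)
          · rcases Classical.em (p ∣ s.val) with hp' | hp'
            · exact Or.inl ⟨hp', h⟩
            · exact Or.inr (Or.inr ⟨h, hsq s hs h hp'⟩)
          · rcases Classical.em (p ∣ s.val) with hp' | hp'
            · exact Or.inr (Or.inl ⟨hp', h⟩)
            · exact Or.inr (Or.inr ⟨hsr s hs h hp', h⟩)
        ext v
        simp only [Finset.mem_filter, Finset.mem_univ, true_and]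
        constructor
        · exact hS2 v
        · intro hv2
          by_contra hvS
          obtain ⟨t, htS, hadj⟩ := hdom v hvS
          rw [adj] at hadj
          have ht2 := hS2 t htS
          obtain ⟨-, c1, c2, c3⟩ := hadj
          rcases ht2 with ⟨t1, t2⟩ | ⟨t1, t2⟩ | ⟨t1, t2⟩ <;>
            rcases hv2 with ⟨v1, v2⟩ | ⟨v1, v2⟩ | ⟨v1, v2⟩
          · exact c1 ⟨t1, v1⟩
          · exact c1 ⟨t1, v1⟩
          · exact c2 ⟨t2, v1⟩
          · exact c1 ⟨t1, v1⟩
          · exact c1 ⟨t1, v1⟩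
          · exact c3 ⟨t2, v2⟩
          · exact c2 ⟨t1, v2⟩
          · exact c3 ⟨t2, v2⟩
          · exact c2 ⟨t1, v1⟩
  · -- backward: each candidate is an independent dominating set
    intro h
    rcases h with ⟨u, hunit, rfl⟩ | rfl | rfl | rfl | rfl
    · rw [unit3] at hunit
      obtain ⟨hu1, hu2, hu3⟩ := hunit
      constructor
      · intro x hx y hy hadj
        simp only [Finset.mem_singleton] at hx hy
        rw [hx, hy] at hadj
        exact ((adj u u).mp hadj).1 rfl
      · intro v hv
        simp only [Finset.mem_singleton] at hv
        exact ⟨u, Finset.mem_singleton_self u, (adj u v).mpr ⟨fun h => hv h.symm,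
          fun h => hu1 h.1, fun h => hu2 h.1, fun h => hu3 h.1⟩⟩
    · constructor
      · intro x hx y hy hadj
        simp only [Finset.mem_filter, Finset.mem_univ, true_and] at hx hy
        exact ((adj x y).mp hadj).2.1 ⟨hx, hy⟩
      · intro v hv
        simp only [Finset.mem_filter, Finset.mem_univ, true_and] at hv
        refine ⟨(p : ZMod n), by simp [Finset.mem_filter, hwp], ?_⟩
        rw [adj]
        refine ⟨?_, ?_, ?_, ?_⟩
        · intro h; rw [h] at hwp; exact hv (hwp ▸ dvd_refl p)
        · rw [hwp]; exact fun h => hv h.2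
        · rw [hwp]; exact fun h => hnqp h.1
        · rw [hwp]; exact fun h => hnrp h.1
    · constructor
      · intro x hx y hy hadj
        simp only [Finset.mem_filter, Finset.mem_univ, true_and] at hx hy
        exact ((adj x y).mp hadj).2.2.1 ⟨hx, hy⟩
      · intro v hv
        simp only [Finset.mem_filter, Finset.mem_univ, true_and] at hv
        refine ⟨(q : ZMod n), by simp [Finset.mem_filter, hwq], ?_⟩
        rw [adj]
        refine ⟨?_, ?_, ?_, ?_⟩
        · intro h; rw [h] at hwq; exact hv (hwq ▸ dvd_refl q)
        · rw [hwq]; exact fun h => hnpq h.1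
        · rw [hwq]; exact fun h => hv h.2
        · rw [hwq]; exact fun h => hnrq h.1
    · constructor
      · intro x hx y hy hadj
        simp only [Finset.mem_filter, Finset.mem_univ, true_and] at hx hy
        exact ((adj x y).mp hadj).2.2.2 ⟨hx, hy⟩
      · intro v hv
        simp only [Finset.mem_filter, Finset.mem_univ, true_and] at hv
        refine ⟨(r : ZMod n), by simp [Finset.mem_filter, hwr], ?_⟩
        rw [adj]
        refine ⟨?_, ?_, ?_, ?_⟩
        · intro h; rw [h] at hwr; exact hv (hwr ▸ dvd_refl r)
        · rw [hwr]; exact fun h => hnpr h.1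
        · rw [hwr]; exact fun h => hnqr h.1
        · rw [hwr]; exact fun h => hv h.2
    · constructor
      · intro x hx y hy hadj
        simp only [Finset.mem_filter, Finset.mem_univ, true_and] at hx hy
        rw [adj] at hadj
        obtain ⟨-, c1, c2, c3⟩ := hadj
        rcases hx with ⟨t1, t2⟩ | ⟨t1, t2⟩ | ⟨t1, t2⟩ <;>
          rcases hy with ⟨v1, v2⟩ | ⟨v1, v2⟩ | ⟨v1, v2⟩
        · exact c1 ⟨t1, v1⟩
        · exact c1 ⟨t1, v1⟩
        · exact c2 ⟨t2, v1⟩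
        · exact c1 ⟨t1, v1⟩
        · exact c1 ⟨t1, v1⟩
        · exact c3 ⟨t2, v2⟩
        · exact c2 ⟨t1, v2⟩
        · exact c3 ⟨t2, v2⟩
        · exact c2 ⟨t1, v1⟩
      · intro v hv
        simp only [Finset.mem_filter, Finset.mem_univ, true_and] at hv
        push_neg at hv
        by_cases hpv : p ∣ v.val
        · have hqv : ¬ q ∣ v.val := hv.1 hpv
          have hrv : ¬ r ∣ v.val := hv.2.1 hpv
          refine ⟨((q*r : ℕ) : ZMod n), ?_, ?_⟩
          · simp only [Finset.mem_filter, Finset.mem_univ, true_and, hwqr]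
            exact Or.inr (Or.inr ⟨Dvd.dvd.mul_right dvd_rfl r, Dvd.dvd.mul_left dvd_rfl q⟩)
          · rw [adj]
            refine ⟨?_, ?_, ?_, ?_⟩
            · intro h; rw [h] at hwqr; exact hqv (hwqr ▸ Dvd.dvd.mul_right dvd_rfl r)
            · rw [hwqr]; exact fun h => hnp_qr h.1
            · rw [hwqr]; exact fun h => hqv h.2
            · rw [hwqr]; exact fun h => hrv h.2
        · by_cases hqv : q ∣ v.val
          · have hrv : ¬ r ∣ v.val := hv.2.2 hqv
            refine ⟨((p*r : ℕ) : ZMod n), ?_, ?_⟩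
            · simp only [Finset.mem_filter, Finset.mem_univ, true_and, hwpr]
              exact Or.inr (Or.inl ⟨Dvd.dvd.mul_right dvd_rfl r, Dvd.dvd.mul_left dvd_rfl p⟩)
            · rw [adj]
              refine ⟨?_, ?_, ?_, ?_⟩
              · intro h; rw [h] at hwpr; exact hpv (hwpr ▸ Dvd.dvd.mul_right dvd_rfl r)
              · rw [hwpr]; exact fun h => hpv h.2
              · rw [hwpr]; exact fun h => hnq_pr h.1
              · rw [hwpr]; exact fun h => hrv h.2
          · refine ⟨((p*q : ℕ) : ZMod n), ?_, ?_⟩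
            · simp only [Finset.mem_filter, Finset.mem_univ, true_and, hwpq]
              exact Or.inl ⟨Dvd.dvd.mul_right dvd_rfl q, Dvd.dvd.mul_left dvd_rfl p⟩
            · rw [adj]
              refine ⟨?_, ?_, ?_, ?_⟩
              · intro h; rw [h] at hwpq; exact hpv (hwpq ▸ Dvd.dvd.mul_right dvd_rfl q)
              · rw [hwpq]; exact fun h => hpv h.2
              · rw [hwpq]; exact fun h => hqv h.2
              · rw [hwpq]; exact fun h => hnr_pq h.1

end Char

lemma indepDomPoly_eq_sum {V : Type*} [Fintype V] [DecidableEq V]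
    (G : SimpleGraph V) [DecidablePred (IsIndepDomSet G)] :
    indepDomPoly G
      = ∑ S ∈ Finset.univ.filter (fun S => IsIndepDomSet G S), (X : ℝ[X]) ^ S.card := by
  classical
  rw [← Finset.sum_fiberwise_of_maps_to (t := range (Nat.card V + 1))
    (g := Finset.card)
    (fun S _ => by
      rw [Finset.mem_range, Nat.card_eq_fintype_card]
      exact Nat.lt_succ_of_le (Finset.card_le_univ S))
    (fun S : Finset V => (X : ℝ[X]) ^ S.card)]
  unfold indepDomPoly
  refine Finset.sum_congr rfl fun k _ => ?_
  have h1 : ∀ S ∈ (Finset.univ.filter (fun S => IsIndepDomSet G S)).filter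
      (fun S => S.card = k), (X : ℝ[X]) ^ S.card = (X : ℝ[X]) ^ k := by
    intro S hS
    rw [(Finset.mem_filter.mp hS).2]
  rw [Finset.sum_congr rfl h1, Finset.sum_const, nsmul_eq_mul]
  congr 1
  rw [Finset.filter_filter]
  rw [Nat.card_eq_fintype_card, Fintype.card_subtype]
  simp only [map_natCast]

/-- For `n = p^{n₁} q^{n₂} r^{n₃}` with primes `p < q < r`, `n₁, n₂, n₃ ≥ 1`, and
`A = p^{n₁−1} q^{n₂−1} r^{n₃−1}`,
`D_i(Γ(ℤ_n), x) = φ(n)·x + x^(A(p+q+r−2)) + x^(A·pq) + x^(A·pr) + x^(A·qr)`. -/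

theorem stmt_8 (p q r n₁ n₂ n₃ : ℕ) (hp : p.Prime) (hq : q.Prime) (hr : r.Prime)
    (hpq : p < q) (hqr : q < r) (h1 : 1 ≤ n₁) (h2 : 1 ≤ n₂) (h3 : 1 ≤ n₃) :
    indepDomPoly (comaximalGraph (p ^ n₁ * q ^ n₂ * r ^ n₃)) =
      Polynomial.C ((Nat.totient (p ^ n₁ * q ^ n₂ * r ^ n₃) : ℝ)) * Polynomial.X +
        Polynomial.X ^ ((p ^ (n₁ - 1) * q ^ (n₂ - 1) * r ^ (n₃ - 1)) * (p + q + r - 2)) +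
        Polynomial.X ^ ((p ^ (n₁ - 1) * q ^ (n₂ - 1) * r ^ (n₃ - 1)) * (p * q)) +
        Polynomial.X ^ ((p ^ (n₁ - 1) * q ^ (n₂ - 1) * r ^ (n₃ - 1)) * (p * r)) +
        Polynomial.X ^ ((p ^ (n₁ - 1) * q ^ (n₂ - 1) * r ^ (n₃ - 1)) * (q * r)) := by
  classical
  obtain ⟨aa, rfl⟩ : ∃ t, n₁ = t + 1 := ⟨n₁ - 1, by omega⟩
  obtain ⟨bb, rfl⟩ : ∃ t, n₂ = t + 1 := ⟨n₂ - 1, by omega⟩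
  obtain ⟨cc, rfl⟩ : ∃ t, n₃ = t + 1 := ⟨n₃ - 1, by omega⟩
  simp only [Nat.add_sub_cancel]
  have hp2 := hp.two_le
  have hq2 := hq.two_le
  have hr2 := hr.two_le
  have hpq' : p ≠ q := Nat.ne_of_lt hpq
  have hpr' : p ≠ r := Nat.ne_of_lt (hpq.trans hqr)
  have hqr' : q ≠ r := Nat.ne_of_lt hqr
  set n := p ^ (aa + 1) * q ^ (bb + 1) * r ^ (cc + 1) with hn
  haveI : NeZero n := ⟨by rw [hn]; positivity⟩
  set A := p ^ aa * q ^ bb * r ^ cc with hA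
  have hA1 : 1 ≤ A := by
    have : 0 < A := by rw [hA]; positivity
    omega
  -- non-divisibilities
  have hnqp : ¬ q ∣ p := fun h => hpq' ((Nat.prime_dvd_prime_iff_eq hq hp).mp h).symm
  have hnrp : ¬ r ∣ p := fun h => hpr' ((Nat.prime_dvd_prime_iff_eq hr hp).mp h).symm
  have hnpq : ¬ p ∣ q := fun h => hpq' ((Nat.prime_dvd_prime_iff_eq hp hq).mp h)
  have hnrq : ¬ r ∣ q := fun h => hqr' ((Nat.prime_dvd_prime_iff_eq hr hq).mp h).symm
  have hnpr : ¬ p ∣ r := fun h => hpr' ((Nat.prime_dvd_prime_iff_eq hp hr).mp h)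
  have hnqr : ¬ q ∣ r := fun h => hqr' ((Nat.prime_dvd_prime_iff_eq hq hr).mp h)
  -- size facts for witnesses
  have hpqr_le : p * q * r ≤ n := by
    rw [hn]
    exact Nat.mul_le_mul (Nat.mul_le_mul (Nat.le_self_pow (Nat.succ_ne_zero _) p)
      (Nat.le_self_pow (Nat.succ_ne_zero _) q)) (Nat.le_self_pow (Nat.succ_ne_zero _) r)
  have hpq_lt : p * q < n := lt_of_lt_of_le
    ((Nat.lt_mul_iff_one_lt_right (by positivity)).mpr (by omega)) hpqr_le
  have hpr_lt : p * r < n := by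
    refine lt_of_lt_of_le ?_ hpqr_le
    calc p * r < q * (p * r) := (Nat.lt_mul_iff_one_lt_left (by positivity)).mpr (by omega)
      _ = p * q * r := by ring
  have hp_lt : p < n := lt_of_le_of_lt (Nat.le_mul_of_pos_right p (by omega)) hpq_lt
  have hq_lt : q < n := lt_of_le_of_lt (Nat.le_mul_of_pos_left q (by omega)) hpq_lt
  have hr_lt : r < n := lt_of_le_of_lt (Nat.le_mul_of_pos_left r (by omega)) hpr_lt
  have hwp : ((p : ZMod n)).val = p := ZMod.val_cast_of_lt hp_lt
  have hwq : ((q : ZMod n)).val = q := ZMod.val_cast_of_lt hq_lt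
  have hwr : ((r : ZMod n)).val = r := ZMod.val_cast_of_lt hr_lt
  -- the four large independent dominating sets
  set Dp : Finset (ZMod n) := univ.filter (fun x : ZMod n => p ∣ x.val) with hDp
  set Dq : Finset (ZMod n) := univ.filter (fun x : ZMod n => q ∣ x.val) with hDq
  set Dr : Finset (ZMod n) := univ.filter (fun x : ZMod n => r ∣ x.val) with hDr
  set E : Finset (ZMod n) := univ.filter (fun x : ZMod n =>
    (p ∣ x.val ∧ q ∣ x.val) ∨ (p ∣ x.val ∧ r ∣ x.val) ∨ (q ∣ x.val ∧ r ∣ x.val)) with hE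
  -- cardinalities
  have cDp : Dp.card = A * (q * r) := card_dvd_val p (A * (q * r)) hp.pos (by rw [hn, hA]; ring)
  have cDq : Dq.card = A * (p * r) := card_dvd_val q (A * (p * r)) hq.pos (by rw [hn, hA]; ring)
  have cDr : Dr.card = A * (p * q) := card_dvd_val r (A * (p * q)) hr.pos (by rw [hn, hA]; ring)
  have copPQ : Nat.Coprime p q := (Nat.coprime_primes hp hq).mpr hpq'
  have copPR : Nat.Coprime p r := (Nat.coprime_primes hp hr).mpr hpr'
  have copQR : Nat.Coprime q r := (Nat.coprime_primes hq hr).mpr hqr'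
  set X' : Finset (ZMod n) := univ.filter (fun x : ZMod n => p ∣ x.val ∧ q ∣ x.val) with hX'
  set Y' : Finset (ZMod n) := univ.filter (fun x : ZMod n => p ∣ x.val ∧ r ∣ x.val) with hY'
  set Z' : Finset (ZMod n) := univ.filter (fun x : ZMod n => q ∣ x.val ∧ r ∣ x.val) with hZ'
  set T' : Finset (ZMod n) := univ.filter (fun x : ZMod n => p * q * r ∣ x.val) with hT'
  have cX' : X'.card = A * r := by
    have : X' = univ.filter (fun x : ZMod n => p * q ∣ x.val) := by
      ext x
      simp only [hX', mem_filter, mem_univ, true_and]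
      constructor
      · rintro ⟨h1', h2'⟩; exact copPQ.mul_dvd_of_dvd_of_dvd h1' h2'
      · intro h; exact ⟨(dvd_mul_right p q).trans h, (dvd_mul_left q p).trans h⟩
    rw [this]
    exact card_dvd_val (p * q) (A * r) (by positivity) (by rw [hn, hA]; ring)
  have cY' : Y'.card = A * q := by
    have : Y' = univ.filter (fun x : ZMod n => p * r ∣ x.val) := by
      ext x
      simp only [hY', mem_filter, mem_univ, true_and]
      constructor
      · rintro ⟨h1', h2'⟩; exact copPR.mul_dvd_of_dvd_of_dvd h1' h2'
      · intro h; exact ⟨(dvd_mul_right p r).trans h, (dvd_mul_left r p).trans h⟩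
    rw [this]
    exact card_dvd_val (p * r) (A * q) (by positivity) (by rw [hn, hA]; ring)
  have cZ' : Z'.card = A * p := by
    have : Z' = univ.filter (fun x : ZMod n => q * r ∣ x.val) := by
      ext x
      simp only [hZ', mem_filter, mem_univ, true_and]
      constructor
      · rintro ⟨h1', h2'⟩; exact copQR.mul_dvd_of_dvd_of_dvd h1' h2'
      · intro h; exact ⟨(dvd_mul_right q r).trans h, (dvd_mul_left r q).trans h⟩
    rw [this]
    exact card_dvd_val (q * r) (A * p) (by positivity) (by rw [hn, hA]; ring)
  have cT' : T'.card = A := card_dvd_val (p * q * r) A (by positivity) (by rw [hn, hA]; ring)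
  have hpd : p ∣ p * q * r := (dvd_mul_right p q).mul_right r
  have hqd : q ∣ p * q * r := (dvd_mul_left q p).mul_right r
  have hrd : r ∣ p * q * r := dvd_mul_left r (p * q)
  have copPQ_R : Nat.Coprime (p * q) r := copPR.mul copQR
  have hXY : X' ∩ Y' = T' := by
    ext x
    simp only [hX', hY', hT', mem_inter, mem_filter, mem_univ, true_and]
    constructor
    · rintro ⟨⟨a1, a2⟩, -, a4⟩
      exact copPQ_R.mul_dvd_of_dvd_of_dvd (copPQ.mul_dvd_of_dvd_of_dvd a1 a2) a4
    · intro h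
      exact ⟨⟨hpd.trans h, hqd.trans h⟩, hpd.trans h, hrd.trans h⟩
  have hXZ : X' ∩ Z' = T' := by
    ext x
    simp only [hX', hZ', hT', mem_inter, mem_filter, mem_univ, true_and]
    constructor
    · rintro ⟨⟨a1, a2⟩, -, a4⟩
      exact copPQ_R.mul_dvd_of_dvd_of_dvd (copPQ.mul_dvd_of_dvd_of_dvd a1 a2) a4
    · intro h
      exact ⟨⟨hpd.trans h, hqd.trans h⟩, hqd.trans h, hrd.trans h⟩
  have hYZ : Y' ∩ Z' = T' := by
    ext x
    simp only [hY', hZ', hT', mem_inter, mem_filter, mem_univ, true_and]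
    constructor
    · rintro ⟨⟨a1, a2⟩, a3, -⟩
      exact copPQ_R.mul_dvd_of_dvd_of_dvd (copPQ.mul_dvd_of_dvd_of_dvd a1 a3) a2
    · intro h
      exact ⟨⟨hpd.trans h, hrd.trans h⟩, hqd.trans h, hrd.trans h⟩
  have hEun : E = X' ∪ Y' ∪ Z' := by
    ext x
    simp only [hE, hX', hY', hZ', mem_union, mem_filter, mem_univ, true_and]
    tauto
  have e1 : (X' ∪ Y' ∪ Z').card + ((X' ∪ Y') ∩ Z').card = (X' ∪ Y').card + Z'.card :=
    card_union_add_card_inter _ _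
  have e2 : (X' ∪ Y').card + (X' ∩ Y').card = X'.card + Y'.card :=
    card_union_add_card_inter _ _
  have e3 : ((X' ∩ Z') ∪ (Y' ∩ Z')).card + ((X' ∩ Z') ∩ (Y' ∩ Z')).card
      = (X' ∩ Z').card + (Y' ∩ Z').card := card_union_add_card_inter _ _
  rw [union_inter_distrib_right, hXZ, hYZ, union_self] at e1
  rw [hXY] at e2
  clear e3
  rw [cT'] at e1 e2
  rw [cZ'] at e1
  rw [cX', cY'] at e2
  have cE : E.card = A * (p + q + r - 2) := by
    have harith : A * (p + q + r - 2) = A * p + A * q + A * r - 2 * A := by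
      rw [Nat.mul_sub]
      congr 1
      · ring
      · ring
    rw [hEun, harith]
    omega
  have h4qr : 4 ≤ q * r := by have := Nat.mul_le_mul hq2 hr2; omega
  have h4pr : 4 ≤ p * r := by have := Nat.mul_le_mul hp2 hr2; omega
  have h4pq : 4 ≤ p * q := by have := Nat.mul_le_mul hp2 hq2; omega
  have hgt1a : 4 ≤ A * (q * r) := by have := Nat.mul_le_mul hA1 h4qr; omega
  have hgt1b : 4 ≤ A * (p * r) := by have := Nat.mul_le_mul hA1 h4pr; omega
  have hgt1c : 4 ≤ A * (p * q) := by have := Nat.mul_le_mul hA1 h4pq; omega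
  have hgt1d : 4 ≤ A * (p + q + r - 2) := by
    have h4 : 4 ≤ p + q + r - 2 := by omega
    have := Nat.mul_le_mul hA1 h4
    omega
  have memDp : (p : ZMod n) ∈ Dp := by
    simp only [hDp, mem_filter, mem_univ, true_and, hwp]
    exact dvd_rfl
  have memDq : (q : ZMod n) ∈ Dq := by
    simp only [hDq, mem_filter, mem_univ, true_and, hwq]
    exact dvd_rfl
  have memDr : (r : ZMod n) ∈ Dr := by
    simp only [hDr, mem_filter, mem_univ, true_and, hwr]
    exact dvd_rfl
  have hDpDq : Dp ≠ Dq := by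
    intro h
    rw [h] at memDp
    simp only [hDq, mem_filter, mem_univ, true_and, hwp] at memDp
    exact hnqp memDp
  have hDpDr : Dp ≠ Dr := by
    intro h
    rw [h] at memDp
    simp only [hDr, mem_filter, mem_univ, true_and, hwp] at memDp
    exact hnrp memDp
  have hDqDr : Dq ≠ Dr := by
    intro h
    rw [h] at memDq
    simp only [hDr, mem_filter, mem_univ, true_and, hwq] at memDq
    exact hnrq memDq
  have hDpE : Dp ≠ E := by
    intro h
    rw [h] at memDp
    simp only [hE, mem_filter, mem_univ, true_and, hwp] at memDp
    rcases memDp with ⟨-, h'⟩ | ⟨-, h'⟩ | ⟨h', -⟩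
    · exact hnqp h'
    · exact hnrp h'
    · exact hnqp h'
  have hDqE : Dq ≠ E := by
    intro h
    rw [h] at memDq
    simp only [hE, mem_filter, mem_univ, true_and, hwq] at memDq
    rcases memDq with ⟨h', -⟩ | ⟨h', -⟩ | ⟨-, h'⟩
    · exact hnpq h'
    · exact hnpq h'
    · exact hnrq h'
  have hDrE : Dr ≠ E := by
    intro h
    rw [h] at memDr
    simp only [hE, mem_filter, mem_univ, true_and, hwr] at memDr
    rcases memDr with ⟨h', -⟩ | ⟨h', -⟩ | ⟨h', -⟩
    · exact hnpr h'
    · exact hnpr h'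
    · exact hnqr h'
  have hchar := ids_char (aa := aa) (bb := bb) (cc := cc) hp hq hr hpq' hpr' hqr' rfl
  have hS : (univ : Finset (Finset (ZMod n))).filter
        (fun S => IsIndepDomSet (comaximalGraph n) S)
      = ((univ : Finset (ZMod n)).filter (fun u => IsUnit u)).image
          (fun u => ({u} : Finset (ZMod n))) ∪ {Dp, Dq, Dr, E} := by
    ext S
    simp only [mem_filter, mem_univ, true_and, mem_union, mem_image, mem_insert,
      mem_singleton]
    rw [hchar S]
    constructor
    · rintro (⟨u, hu, rfl⟩ | h | h | h | h)
      · exact Or.inl ⟨u, by simp [hu], rfl⟩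
      · exact Or.inr (Or.inl h)
      · exact Or.inr (Or.inr (Or.inl h))
      · exact Or.inr (Or.inr (Or.inr (Or.inl h)))
      · exact Or.inr (Or.inr (Or.inr (Or.inr h)))
    · rintro (⟨u, hu, rfl⟩ | h | h | h | h)
      · exact Or.inl ⟨u, by simpa using hu, rfl⟩
      · exact Or.inr (Or.inl h)
      · exact Or.inr (Or.inr (Or.inl h))
      · exact Or.inr (Or.inr (Or.inr (Or.inl h)))
      · exact Or.inr (Or.inr (Or.inr (Or.inr h)))
  rw [indepDomPoly_eq_sum, hS]
  have hdisj : Disjoint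
      (((univ : Finset (ZMod n)).filter (fun u => IsUnit u)).image
        (fun u => ({u} : Finset (ZMod n))))
      ({Dp, Dq, Dr, E} : Finset (Finset (ZMod n))) := by
    rw [Finset.disjoint_left]
    rintro S hS1 hS2
    obtain ⟨u, -, rfl⟩ := mem_image.mp hS1
    have h1' : ({u} : Finset (ZMod n)).card = 1 := Finset.card_singleton u
    rcases mem_insert.mp hS2 with h | hrest
    · rw [h] at h1'; rw [cDp] at h1'; omega
    rcases mem_insert.mp hrest with h | hrest2
    · rw [h] at h1'; rw [cDq] at h1'; omega
    rcases mem_insert.mp hrest2 with h | hrest3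
    · rw [h] at h1'; rw [cDr] at h1'; omega
    · rw [mem_singleton.mp hrest3] at h1'; rw [cE] at h1'; omega
  rw [Finset.sum_union hdisj]
  rw [Finset.sum_image (fun x _ y _ h => Finset.singleton_injective h)]
  have hsum1 : ∑ u ∈ (univ : Finset (ZMod n)).filter (fun u => IsUnit u),
      (X : ℝ[X]) ^ ({u} : Finset (ZMod n)).card
      = Polynomial.C ((n.totient : ℝ)) * X := by
    simp only [Finset.card_singleton, pow_one]
    rw [Finset.sum_const, card_isUnit, nsmul_eq_mul]
    simp [map_natCast]
  rw [hsum1]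
  have hsum2 : ∑ S ∈ ({Dp, Dq, Dr, E} : Finset (Finset (ZMod n))),
      (X : ℝ[X]) ^ S.card
      = (X : ℝ[X]) ^ Dp.card + X ^ Dq.card + X ^ Dr.card + X ^ E.card := by
    rw [Finset.sum_insert (by simp [hDpDq, hDpDr, hDpE]),
      Finset.sum_insert (by simp [hDqDr, hDqE]),
      Finset.sum_insert (by simp [hDrE]),
      Finset.sum_singleton]
    ring
  rw [hsum2, cDp, cDq, cDr, cE]
  ring
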